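/- Fix N ≥ 2, 0 < ε < 1/2, and ν ∈ {1,…,N−1}. Then for every M ≥ 1, every u ∈ ℂ with ν + ε ≤ |u| ≤ ν + 1 − ε, and every k ∈ {0,…,N} with k ≠ ν: binom(N,k) (|u|^k/k!)^M / [ binom(N,ν) (|u|^ν/ν!)^M ] ≤ ( (N−ν)! ν! / ((N−k)! k!) ) · ( N/(N+ε) )^M. Consequently, | Q_N^{(M)}(u) / [ binom(N,ν)(−1)^ν (u^ν/ν!)^M ] − 1 | ≤ Σ_{k=0, k≠ν}^{N} ( (N−ν)! ν! / ((N−k)! k!) ) ( N/(N+ε) )^M. -/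

import Mathlib

open Finset

/-- The rescaled polynomial `Q_N^{(M)}(u) = Σ_{k=0}^N C(N,k) (−1)^k (u^k/k!)^M`. -/
noncomputable def Qpoly (N M : ℕ) (u : ℂ) : ℂ :=
  ∑ k ∈ Finset.range (N + 1), (N.choose k : ℂ) * (-1) ^ k * (u ^ k / (k.factorial : ℂ)) ^ M

private lemma facpow1 (k d : ℕ) : (k + d).factorial ≤ k.factorial * (k + d) ^ d := by
  induction d with
  | zero => simp
  | succ e ih =>
    have h1 : (k + (e + 1)).factorial = (k + e + 1) * (k + e).factorial := by
      rw [show k + (e + 1) = (k + e) + 1 from rfl, Nat.factorial_succ]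
    rw [h1]
    calc (k + e + 1) * (k + e).factorial
        ≤ (k + e + 1) * (k.factorial * (k + e) ^ e) := Nat.mul_le_mul_left _ ih
      _ ≤ (k + e + 1) * (k.factorial * (k + e + 1) ^ e) :=
          Nat.mul_le_mul_left _ (Nat.mul_le_mul_left _ (Nat.pow_le_pow_left (Nat.le_succ _) e))
      _ = k.factorial * (k + (e + 1)) ^ (e + 1) := by ring

private lemma facpow2 (ν d : ℕ) : ν.factorial * (ν + 1) ^ d ≤ (ν + d).factorial := by
  induction d with
  | zero => simp
  | succ e ih =>
    have h1 : (ν + (e + 1)).factorial = (ν + e + 1) * (ν + e).factorial := by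
      rw [show ν + (e + 1) = (ν + e) + 1 from rfl, Nat.factorial_succ]
    rw [h1]
    calc ν.factorial * (ν + 1) ^ (e + 1) = (ν + 1) * (ν.factorial * (ν + 1) ^ e) := by ring
      _ ≤ (ν + e + 1) * (ν + e).factorial :=
          Nat.mul_le_mul (by omega) ih

private lemma helperpow (a b c c' : ℝ) (ha : 0 ≤ a) (hab : a ≤ b) (hc' : 0 ≤ c')
    (h : c * a ≤ c' * b) (e : ℕ) : c * a ^ (e + 1) ≤ c' * b ^ (e + 1) := by
  have hb : 0 ≤ b := ha.trans hab
  calc c * a ^ (e + 1) = (c * a) * a ^ e := by ring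
    _ ≤ (c' * b) * b ^ e :=
        mul_le_mul h (pow_le_pow_left₀ ha hab e) (pow_nonneg ha e) (mul_nonneg hc' hb)
    _ = c' * b ^ (e + 1) := by ring

private lemma keyA (N ν k : ℕ) (ε x : ℝ) (hε : 0 < ε) (hε' : ε < 1 / 2)
    (hν1 : 1 ≤ ν) (hνN : ν + 1 ≤ N) (hk : k ≤ N) (hkν : k ≠ ν)
    (hx1 : (ν : ℝ) + ε ≤ x) (hx2 : x ≤ (ν : ℝ) + 1 - ε) :
    x ^ k / k.factorial ≤ (N / (N + ε)) * (x ^ ν / ν.factorial) := by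
  have hν0 : (0:ℝ) < ν := by exact_mod_cast hν1
  have hx0 : 0 < x := lt_of_lt_of_le (by positivity) hx1
  have hNR : (ν : ℝ) + 1 ≤ N := by exact_mod_cast hνN
  have hNε : (0:ℝ) < (N : ℝ) + ε := by positivity
  have hfk : (0:ℝ) < (k.factorial : ℝ) := by exact_mod_cast k.factorial_pos
  have hfν : (0:ℝ) < (ν.factorial : ℝ) := by exact_mod_cast ν.factorial_pos
  have main : ((N:ℝ) + ε) * ((ν.factorial : ℝ) * x ^ k) ≤ (N:ℝ) * ((k.factorial : ℝ) * x ^ ν) := by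
    rcases lt_or_gt_of_ne hkν with hlt | hgt
    · -- k < ν
      obtain ⟨e, he⟩ : ∃ e, ν = k + (e + 1) := ⟨ν - k - 1, by omega⟩
      set d := e + 1 with hd
      have h1 : (ν.factorial : ℝ) ≤ (k.factorial : ℝ) * (ν : ℝ) ^ d := by
        have := facpow1 k d
        rw [← he] at this
        exact_mod_cast this
      have h2 : ((N:ℝ) + ε) * (ν : ℝ) ^ d ≤ (N:ℝ) * ((ν : ℝ) + ε) ^ d := by
        apply helperpow _ _ _ _ (le_of_lt hν0) (by linarith) (by positivity)
        nlinarith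
      have h3 : ((ν : ℝ) + ε) ^ d ≤ x ^ d := pow_le_pow_left₀ (by positivity) hx1 d
      have hxν : x ^ ν = x ^ k * x ^ d := by rw [he, pow_add]
      have hxk : (0:ℝ) ≤ x ^ k := le_of_lt (pow_pos hx0 k)
      calc ((N:ℝ) + ε) * ((ν.factorial : ℝ) * x ^ k)
          ≤ ((N:ℝ) + ε) * (((k.factorial : ℝ) * (ν : ℝ) ^ d) * x ^ k) := by
            apply mul_le_mul_of_nonneg_left _ (le_of_lt hNε)
            exact mul_le_mul_of_nonneg_right h1 hxk
        _ = ((((N:ℝ) + ε) * (ν : ℝ) ^ d) * (k.factorial : ℝ)) * x ^ k := by ring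
        _ ≤ (((N:ℝ) * ((ν : ℝ) + ε) ^ d) * (k.factorial : ℝ)) * x ^ k := by
            apply mul_le_mul_of_nonneg_right _ hxk
            exact mul_le_mul_of_nonneg_right h2 (le_of_lt hfk)
        _ ≤ (((N:ℝ) * x ^ d) * (k.factorial : ℝ)) * x ^ k := by
            apply mul_le_mul_of_nonneg_right _ hxk
            apply mul_le_mul_of_nonneg_right _ (le_of_lt hfk)
            apply mul_le_mul_of_nonneg_left h3 (by positivity)
        _ = (N:ℝ) * ((k.factorial : ℝ) * x ^ ν) := by rw [hxν]; ring
    · -- ν < k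
      obtain ⟨e, he⟩ : ∃ e, k = ν + (e + 1) := ⟨k - ν - 1, by omega⟩
      set d := e + 1 with hd
      have h1 : (ν.factorial : ℝ) * ((ν : ℝ) + 1) ^ d ≤ (k.factorial : ℝ) := by
        have := facpow2 ν d
        rw [← he] at this
        exact_mod_cast this
      have h2 : x ^ d ≤ ((ν : ℝ) + 1 - ε) ^ d := pow_le_pow_left₀ (le_of_lt hx0) hx2 d
      have h3 : ((N:ℝ) + ε) * ((ν : ℝ) + 1 - ε) ^ d ≤ (N:ℝ) * ((ν : ℝ) + 1) ^ d := by
        apply helperpow _ _ _ _ (by linarith) (by linarith) (by positivity)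
        nlinarith
      have hxν : x ^ k = x ^ ν * x ^ d := by rw [he, pow_add]
      have hxv : (0:ℝ) ≤ x ^ ν := le_of_lt (pow_pos hx0 ν)
      calc ((N:ℝ) + ε) * ((ν.factorial : ℝ) * x ^ k)
          = ((ν.factorial : ℝ) * (((N:ℝ) + ε) * x ^ d)) * x ^ ν := by rw [hxν]; ring
        _ ≤ ((ν.factorial : ℝ) * (((N:ℝ) + ε) * ((ν : ℝ) + 1 - ε) ^ d)) * x ^ ν := by
            apply mul_le_mul_of_nonneg_right _ hxv
            apply mul_le_mul_of_nonneg_left _ (le_of_lt hfν)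
            exact mul_le_mul_of_nonneg_left h2 (le_of_lt hNε)
        _ ≤ ((ν.factorial : ℝ) * ((N:ℝ) * ((ν : ℝ) + 1) ^ d)) * x ^ ν := by
            apply mul_le_mul_of_nonneg_right _ hxv
            exact mul_le_mul_of_nonneg_left h3 (le_of_lt hfν)
        _ = (N:ℝ) * (((ν.factorial : ℝ) * ((ν : ℝ) + 1) ^ d) * x ^ ν) := by ring
        _ ≤ (N:ℝ) * ((k.factorial : ℝ) * x ^ ν) := by
            apply mul_le_mul_of_nonneg_left _ (by positivity)
            exact mul_le_mul_of_nonneg_right h1 hxv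
  rw [div_le_iff₀ hfk]
  have hrw : (N:ℝ) / ((N:ℝ) + ε) * (x ^ ν / (ν.factorial : ℝ)) * (k.factorial : ℝ)
      = ((N:ℝ) * ((k.factorial : ℝ) * x ^ ν)) / (((N:ℝ) + ε) * (ν.factorial : ℝ)) := by
    field_simp
  rw [hrw, le_div_iff₀ (by positivity)]
  nlinarith [main, pow_pos hx0 k]

/-- **Estimates in the annulus `ν + ε ≤ |u| ≤ ν + 1 − ε`** (for `1 ≤ ν ≤ N − 1`): term-by-term,
`C(N,k)(|u|^k/k!)^M / (C(N,ν)(|u|^ν/ν!)^M) ≤ ((N−ν)! ν!/((N−k)! k!)) (N/(N+ε))^M` for `k ≠ ν`,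
and consequently
`|Q_N^{(M)}(u)/(C(N,ν)(−1)^ν (u^ν/ν!)^M) − 1| ≤ Σ_{k≠ν} ((N−ν)! ν!/((N−k)! k!)) (N/(N+ε))^M`. -/
theorem Qpoly_estimate_annulus
    (N ν : ℕ) (hN : 2 ≤ N) (ε : ℝ) (hε : 0 < ε) (hε' : ε < 1 / 2)
    (hν1 : 1 ≤ ν) (hνN : ν ≤ N - 1) :
    ∀ M : ℕ, 1 ≤ M → ∀ u : ℂ,
      (ν : ℝ) + ε ≤ ‖u‖ → ‖u‖ ≤ (ν : ℝ) + 1 - ε →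
      (∀ k : ℕ, k ≤ N → k ≠ ν →
        (N.choose k : ℝ) * ((‖u‖) ^ k / k.factorial) ^ M /
            ((N.choose ν : ℝ) * ((‖u‖) ^ ν / ν.factorial) ^ M)
          ≤ (((N - ν).factorial * ν.factorial : ℕ) : ℝ) /
              (((N - k).factorial * k.factorial : ℕ) : ℝ) * ((N : ℝ) / ((N : ℝ) + ε)) ^ M) ∧
      ‖Qpoly N M u / ((N.choose ν : ℂ) * (-1) ^ ν * (u ^ ν / (ν.factorial : ℂ)) ^ M) - 1‖
        ≤ ∑ k ∈ (Finset.range (N + 1)).erase ν,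
            (((N - ν).factorial * ν.factorial : ℕ) : ℝ) /
              (((N - k).factorial * k.factorial : ℕ) : ℝ) * ((N : ℝ) / ((N : ℝ) + ε)) ^ M := by
  intro M hM u hu1 hu2
  have hνN' : ν + 1 ≤ N := by omega
  set x := ‖u‖ with hx
  have hx0 : 0 < x := lt_of_lt_of_le (by positivity) hu1
  have hνle : ν ≤ N := by omega
  have hcν : (0:ℝ) < (N.choose ν : ℝ) := by exact_mod_cast Nat.choose_pos hνle
  have hfν : (0:ℝ) < (ν.factorial : ℝ) := by exact_mod_cast ν.factorial_pos
  have hden : (0:ℝ) < (N.choose ν : ℝ) * (x ^ ν / ν.factorial) ^ M := by positivity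
  have hpart1 : ∀ k : ℕ, k ≤ N → k ≠ ν →
      (N.choose k : ℝ) * (x ^ k / k.factorial) ^ M /
          ((N.choose ν : ℝ) * (x ^ ν / ν.factorial) ^ M)
        ≤ (((N - ν).factorial * ν.factorial : ℕ) : ℝ) /
            (((N - k).factorial * k.factorial : ℕ) : ℝ) * ((N : ℝ) / ((N : ℝ) + ε)) ^ M := by
    intro k hk hkν
    have hfk : (0:ℝ) < (k.factorial : ℝ) := by exact_mod_cast k.factorial_pos
    have hA : x ^ k / k.factorial ≤ ((N:ℝ) / ((N:ℝ) + ε)) * (x ^ ν / ν.factorial) :=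
      keyA N ν k ε x hε hε' hν1 hνN' hk hkν hu1 hu2
    have hApow : (x ^ k / k.factorial) ^ M
        ≤ ((N:ℝ) / ((N:ℝ) + ε)) ^ M * (x ^ ν / ν.factorial) ^ M := by
      rw [← mul_pow]
      exact pow_le_pow_left₀ (by positivity) hA M
    have hcc : (N.choose k : ℝ) * (((N - k).factorial * k.factorial : ℕ) : ℝ)
        = (N.choose ν : ℝ) * (((N - ν).factorial * ν.factorial : ℕ) : ℝ) := by
      have h1 : N.choose k * ((N - k).factorial * k.factorial) = N.factorial := by
        rw [← Nat.choose_mul_factorial_mul_factorial hk]; ring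
      have h2 : N.choose ν * ((N - ν).factorial * ν.factorial) = N.factorial := by
        rw [← Nat.choose_mul_factorial_mul_factorial hνle]; ring
      exact_mod_cast h1.trans h2.symm
    have hfk' : (0:ℝ) < (((N - k).factorial * k.factorial : ℕ) : ℝ) := by
      have := Nat.factorial_pos (N - k); have := Nat.factorial_pos k; positivity
    have hck : (N.choose k : ℝ) = (((N - ν).factorial * ν.factorial : ℕ) : ℝ) /
        (((N - k).factorial * k.factorial : ℕ) : ℝ) * (N.choose ν : ℝ) := by
      field_simp
      push_cast at hcc ⊢
      linarith [hcc]
    rw [div_le_iff₀ hden]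
    calc (N.choose k : ℝ) * (x ^ k / k.factorial) ^ M
        ≤ (N.choose k : ℝ) * (((N:ℝ) / ((N:ℝ) + ε)) ^ M * (x ^ ν / ν.factorial) ^ M) := by
          apply mul_le_mul_of_nonneg_left hApow (by positivity)
      _ = (((N - ν).factorial * ν.factorial : ℕ) : ℝ) /
            (((N - k).factorial * k.factorial : ℕ) : ℝ) * ((N : ℝ) / ((N : ℝ) + ε)) ^ M *
            ((N.choose ν : ℝ) * (x ^ ν / ν.factorial) ^ M) := by
          rw [hck]; ring
  refine ⟨hpart1, ?_⟩
  set t : ℕ → ℂ := fun k => (N.choose k : ℂ) * (-1) ^ k * (u ^ k / (k.factorial : ℂ)) ^ M with ht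
  have hnorm : ∀ k : ℕ, ‖t k‖ = (N.choose k : ℝ) * (x ^ k / k.factorial) ^ M := by
    intro k
    simp only [ht, norm_mul, norm_pow, norm_div, Complex.norm_natCast, norm_neg, norm_one,
      one_pow, mul_one, hx]
  have hc0 : t ν ≠ 0 := by
    rw [← norm_ne_zero_iff, hnorm ν]
    exact ne_of_gt hden
  have hmem : ν ∈ Finset.range (N + 1) := Finset.mem_range.mpr (by omega)
  have hsum : Qpoly N M u = (∑ k ∈ (Finset.range (N + 1)).erase ν, t k) + t ν :=
    (Finset.sum_erase_add _ _ hmem).symm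
  have hQdiv : Qpoly N M u / t ν - 1 = ∑ k ∈ (Finset.range (N + 1)).erase ν, t k / t ν := by
    rw [hsum, add_div, div_self hc0, add_sub_cancel_right, Finset.sum_div]
  show ‖Qpoly N M u / t ν - 1‖ ≤ _
  rw [hQdiv]
  refine le_trans (norm_sum_le _ _) (Finset.sum_le_sum ?_)
  intro k hk
  rw [Finset.mem_erase, Finset.mem_range] at hk
  rw [norm_div, hnorm, hnorm]
  exact hpart1 k (by omega) hk.1
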